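/- Let S be a semigroup that is the disjoint union of free monogenic subsemigroups ⟨a⟩, ⟨b⟩, ⟨c⟩, and suppose ab = b², ba = a², ac = c^i, ca = b^j, bc = c^k, cb = a^l for positive integers i, j, k, l. Then i = j = k = l = 2. -/

import Mathlib

/-- `pw a n` is `a ^ n` for `n ≥ 1` (with junk value `a` at `n = 0`),
defined in any magma. -/
def pw {S : Type*} [Mul S] (a : S) : ℕ → S
  | 0 => a
  | 1 => a
  | n + 2 => pw a (n + 1) * a

/-- The monogenic subsemigroup `⟨a⟩ = {a^n : n ≥ 1}`. -/
def genSet {S : Type*} [Mul S] (a : S) : Set S := {x | ∃ n, 1 ≤ n ∧ pw a n = x}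

/-- `a` has infinite order: its positive powers are pairwise distinct,
i.e. `⟨a⟩` is free monogenic. -/
def InfOrder {S : Type*} [Mul S] (a : S) : Prop :=
  ∀ m n : ℕ, 1 ≤ m → 1 ≤ n → pw a m = pw a n → m = n

lemma pw_succ {S : Type*} [Mul S] (a : S) {n : ℕ} (hn : 1 ≤ n) :
    pw a (n + 1) = pw a n * a := by
  cases n with
  | zero => omega
  | succ m => rfl

/-- If `x * c = c^(t+1)` then `x * c^n = c^(t+n)` for `n ≥ 1`. -/
lemma mul_pw {S : Type*} [Semigroup S] (x c : S) (t : ℕ)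
    (h : x * c = pw c (t + 1)) :
    ∀ n, 1 ≤ n → x * pw c n = pw c (t + n) := by
  intro n hn
  induction n with
  | zero => omega
  | succ m ih =>
    rcases Nat.lt_or_ge m 1 with hm | hm
    · interval_cases m
      simpa [show pw c 1 = c from rfl] using h
    · rw [pw_succ c hm, ← mul_assoc, ih hm, ← pw_succ c (by omega : 1 ≤ t + m)]
      ring_nf

theorem stmt_16 {S : Type*} [Semigroup S] (a b c : S)
    (ha : InfOrder a) (hb : InfOrder b) (hc : InfOrder c)
    (hab : genSet a ∩ genSet b = ∅) (hac : genSet a ∩ genSet c = ∅)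
    (hbc : genSet b ∩ genSet c = ∅)
    (hcover : genSet a ∪ genSet b ∪ genSet c = Set.univ)
    (i j k l : ℕ) (hi : 1 ≤ i) (hj : 1 ≤ j) (hk : 1 ≤ k) (hl : 1 ≤ l)
    (h1 : a * b = pw b 2) (h2 : b * a = pw a 2)
    (h3 : a * c = pw c i) (h4 : c * a = pw b j)
    (h5 : b * c = pw c k) (h6 : c * b = pw a l) :
    i = 2 ∧ j = 2 ∧ k = 2 ∧ l = 2 := by
  obtain ⟨i', rfl⟩ : ∃ i', i = i' + 1 := ⟨i - 1, by omega⟩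
  obtain ⟨k', rfl⟩ : ∃ k', k = k' + 1 := ⟨k - 1, by omega⟩
  obtain ⟨l', rfl⟩ : ∃ l', l = l' + 1 := ⟨l - 1, by omega⟩
  -- powers of a times c
  have hpac : ∀ m, 1 ≤ m → pw a m * c = pw c (m * i' + 1) := by
    intro m hm
    induction m with
    | zero => omega
    | succ n ih =>
      rcases Nat.lt_or_ge n 1 with hn | hn
      · interval_cases n
        simpa [show pw a 1 = a from rfl] using h3
      · rw [pw_succ a hn, mul_assoc, h3,
          mul_pw (pw a n) c (n * i') (ih hn) (i' + 1) (by omega)]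
        congr 1
        ring
  -- powers of b times a
  have hpba : ∀ m, 1 ≤ m → pw b m * a = pw a (m + 1) := by
    intro m hm
    induction m with
    | zero => omega
    | succ n ih =>
      rcases Nat.lt_or_ge n 1 with hn | hn
      · interval_cases n
        simpa [show pw b 1 = b from rfl] using h2
      · rw [pw_succ b hn, mul_assoc, h2,
          mul_pw (pw b n) a n (ih hn) 2 (by omega)]
  have hcc : c * c = pw c (1 + 1) := rfl
  have hbb : pw b 2 = b * b := rfl
  have haa : pw a 2 = a * a := rfl
  -- Equation 1: (a*b)*c = a*(b*c)  gives i = k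
  have e1 : 2 * k' + 1 = i' + (k' + 1) := by
    apply hc _ _ (by omega) (by omega)
    have lhs : pw b 2 * c = pw c (2 * k' + 1) := by
      rw [hbb, mul_assoc, h5, mul_pw b c k' h5 (k' + 1) (by omega)]
      congr 1; ring
    have rhs : a * pw c (k' + 1) = pw c (i' + (k' + 1)) :=
      mul_pw a c i' h3 (k' + 1) (by omega)
    calc pw c (2 * k' + 1) = pw b 2 * c := lhs.symm
      _ = (a * b) * c := by rw [h1]
      _ = a * (b * c) := mul_assoc a b c
      _ = a * pw c (k' + 1) := by rw [h5]
      _ = pw c (i' + (k' + 1)) := rhs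
  have hik : i' = k' := by omega
  -- Equation 2: (c*b)*c = c*(b*c)  gives (l'+1)*i' + 1 = k' + 2
  have e2 : (l' + 1) * i' + 1 = 1 + (k' + 1) := by
    apply hc _ _ (by omega) (by omega)
    calc pw c ((l' + 1) * i' + 1) = pw a (l' + 1) * c := (hpac (l' + 1) (by omega)).symm
      _ = (c * b) * c := by rw [h6]
      _ = c * (b * c) := mul_assoc c b c
      _ = c * pw c (k' + 1) := by rw [h5]
      _ = pw c (1 + (k' + 1)) := mul_pw c c 1 hcc (k' + 1) (by omega)
  -- From i' = k' and (l'+1)*k' = k'+1 we get l'*k' = 1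
  have hlk : l' * k' = 1 := by
    subst hik
    have : (l' + 1) * i' = i' + 1 := by omega
    nlinarith [this]
  have hl1 : l' = 1 ∧ k' = 1 :=
    ⟨Nat.eq_one_of_mul_eq_one_right hlk, Nat.eq_one_of_mul_eq_one_left hlk⟩
  -- Equation 3: (c*b)*a = c*(b*a)  gives j = l' + 1
  have e3 : l' + 2 = j + 1 := by
    apply ha _ _ (by omega) (by omega)
    calc pw a (l' + 2) = pw a (l' + 1) * a := pw_succ a (by omega)
      _ = (c * b) * a := by rw [h6]
      _ = c * (b * a) := mul_assoc c b a
      _ = c * pw a 2 := by rw [h2]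
      _ = (c * a) * a := by rw [haa, mul_assoc]
      _ = pw b j * a := by rw [h4]
      _ = pw a (j + 1) := hpba j hj
  omega
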